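/- For any subset V of the nonnegative reals with 0 ∈ V, the function M_V defined by M_V(s,t) = t if s = ∞, M_V(s,t) = s if t = ∞, and M_V(s,t) = sup{v ∈ V : v ≤ s and v ≤ t} otherwise, is an m-scheme. Moreover, if U ⊆ V then M_U ≤ M_V pointwise. -/
import Mathlib


open ENNReal NNReal

def IsMScheme (M : ℝ≥0∞ → ℝ≥0∞ → ℝ≥0∞) : Prop :=
  (∀ s t, M s t = M t s) ∧
  (∀ s t v w, s ≤ v → t ≤ w → M s t ≤ M v w) ∧
  (∀ r s t, M r (M s t) = M (M r s) t) ∧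
  (∀ s, M s ⊤ = s)

noncomputable def MV (V : Set ℝ≥0) (s t : ℝ≥0∞) : ℝ≥0∞ :=
  if s = ⊤ then t else if t = ⊤ then s
  else ⨆ (v : ℝ≥0) (_ : v ∈ V ∧ (v : ℝ≥0∞) ≤ s ∧ (v : ℝ≥0∞) ≤ t), (v : ℝ≥0∞)

noncomputable def sig (V : Set ℝ≥0) (s : ℝ≥0∞) : ℝ≥0∞ :=
  ⨆ (v : ℝ≥0) (_ : v ∈ V ∧ (v : ℝ≥0∞) ≤ s), (v : ℝ≥0∞)

lemma sig_le (V : Set ℝ≥0) (s : ℝ≥0∞) : sig V s ≤ s :=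
  iSup₂_le fun _ hv => hv.2

lemma le_sig (V : Set ℝ≥0) {v : ℝ≥0} {s : ℝ≥0∞} (hv : v ∈ V) (h : (v : ℝ≥0∞) ≤ s) :
    (v : ℝ≥0∞) ≤ sig V s :=
  le_iSup₂ (f := fun (v : ℝ≥0) (_ : v ∈ V ∧ (v : ℝ≥0∞) ≤ s) => (v : ℝ≥0∞)) v ⟨hv, h⟩

lemma sig_mono {V : Set ℝ≥0} {s t : ℝ≥0∞} (h : s ≤ t) : sig V s ≤ sig V t :=
  iSup₂_le fun v hv => le_sig V hv.1 (hv.2.trans h)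

lemma sig_subset {U V : Set ℝ≥0} (h : U ⊆ V) (s : ℝ≥0∞) : sig U s ≤ sig V s :=
  iSup₂_le fun v hv => le_sig V (h hv.1) hv.2

lemma MV_eq (V : Set ℝ≥0) {s t : ℝ≥0∞} (hs : s ≠ ⊤) (ht : t ≠ ⊤) :
    MV V s t = sig V (min s t) := by
  rw [MV, if_neg hs, if_neg ht]
  exact iSup_congr fun v => iSup_congr_Prop (by simp [le_min_iff, and_assoc]) (fun _ => rfl)

lemma MV_top_left (V : Set ℝ≥0) (t : ℝ≥0∞) : MV V ⊤ t = t := by simp [MV]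

lemma MV_top_right (V : Set ℝ≥0) (s : ℝ≥0∞) : MV V s ⊤ = s := by
  by_cases hs : s = ⊤ <;> simp [MV, hs]

lemma MV_ne_top (V : Set ℝ≥0) {s t : ℝ≥0∞} (hs : s ≠ ⊤) (ht : t ≠ ⊤) :
    MV V s t ≠ ⊤ := by
  rw [MV_eq V hs ht]
  exact ne_top_of_le_ne_top hs ((sig_le V _).trans (min_le_left _ _))

lemma MV_le_right (V : Set ℝ≥0) (s t : ℝ≥0∞) : MV V s t ≤ t := by
  by_cases hs : s = ⊤
  · simp [hs, MV_top_left]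
  by_cases ht : t = ⊤
  · simp [ht]
  · rw [MV_eq V hs ht]
    exact (sig_le V _).trans (min_le_right _ _)

lemma MV_le_left (V : Set ℝ≥0) (s t : ℝ≥0∞) : MV V s t ≤ s := by
  by_cases hs : s = ⊤
  · simp [hs]
  by_cases ht : t = ⊤
  · simp [ht, MV_top_right]
  · rw [MV_eq V hs ht]
    exact (sig_le V _).trans (min_le_left _ _)

lemma sig_min_sig (V : Set ℝ≥0) (a b : ℝ≥0∞) :
    sig V (min a (sig V b)) = sig V (min a b) := by
  apply le_antisymm
  · exact iSup₂_le fun v hv => le_sig V hv.1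
      (le_min (hv.2.trans (min_le_left _ _))
        ((hv.2.trans (min_le_right _ _)).trans (sig_le V b)))
  · exact iSup₂_le fun v hv => le_sig V hv.1
      (le_min (hv.2.trans (min_le_left _ _))
        (le_sig V hv.1 (hv.2.trans (min_le_right _ _))))

theorem stmt3 :
    (∀ V : Set ℝ≥0, (0 : ℝ≥0) ∈ V → IsMScheme (MV V)) ∧
    (∀ U V : Set ℝ≥0, U ⊆ V → ∀ s t : ℝ≥0∞, MV U s t ≤ MV V s t) := by
  constructor
  · intro V _
    refine ⟨?_, ?_, ?_, fun s => MV_top_right V s⟩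
    · -- symmetry
      intro s t
      by_cases hs : s = ⊤
      · simp [hs, MV_top_left, MV_top_right]
      by_cases ht : t = ⊤
      · simp [ht, MV_top_left, MV_top_right]
      · rw [MV_eq V hs ht, MV_eq V ht hs, min_comm]
    · -- monotone
      intro s t v w hsv htw
      by_cases hv : v = ⊤
      · rw [hv, MV_top_left]
        exact (MV_le_right V s t).trans htw
      by_cases hw : w = ⊤
      · rw [hw, MV_top_right]
        exact (MV_le_left V s t).trans hsv
      · have hs : s ≠ ⊤ := fun h => hv (top_le_iff.mp (h ▸ hsv))
        have ht : t ≠ ⊤ := fun h => hw (top_le_iff.mp (h ▸ htw))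
        rw [MV_eq V hs ht, MV_eq V hv hw]
        exact sig_mono (min_le_min hsv htw)
    · -- associativity
      intro r s t
      by_cases hr : r = ⊤
      · rw [hr, MV_top_left, MV_top_left]
      by_cases ht : t = ⊤
      · rw [ht, MV_top_right, MV_top_right]
      by_cases hs : s = ⊤
      · rw [hs, MV_top_left, MV_top_right]
      · have hst : sig V (min s t) ≠ ⊤ :=
          ne_top_of_le_ne_top hs ((sig_le V _).trans (min_le_left _ _))
        have hrs : sig V (min r s) ≠ ⊤ :=
          ne_top_of_le_ne_top hr ((sig_le V _).trans (min_le_left _ _))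
        have e1 : MV V r (MV V s t) = sig V (min r (min s t)) := by
          rw [MV_eq V hs ht, MV_eq V hr hst, sig_min_sig]
        have e2 : MV V (MV V r s) t = sig V (min (min r s) t) := by
          rw [MV_eq V hr hs, MV_eq V hrs ht, min_comm _ t, sig_min_sig, min_comm t]
        rw [e1, e2, min_assoc]
  · -- subset monotonicity
    intro U V hUV s t
    by_cases hs : s = ⊤
    · simp [hs, MV_top_left]
    by_cases ht : t = ⊤
    · simp [ht, MV_top_right]
    · rw [MV_eq U hs ht, MV_eq V hs ht]
      exact sig_subset hUV _
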